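/- Let g be a compactly supported orientation-preserving C² diffeomorphism of ℝ. Then the centralizer of g in Diff_c²(ℝ) equals the centralizer of g² in Diff_c²(ℝ). -/

import Mathlib

/-- A compactly supported orientation-preserving C² diffeomorphism of ℝ. -/
def IsRDiffc (g : Equiv.Perm ℝ) : Prop :=
  ContDiff ℝ 2 ⇑g ∧ ContDiff ℝ 2 ⇑g.symm ∧ StrictMono ⇑g ∧
  ∃ K : Set ℝ, IsCompact K ∧ ∀ x ∉ K, g x = x

open Set Filter Topology


private lemma deriv_nonneg_of_mono {f : ℝ → ℝ} (hm : Monotone f) {x : ℝ}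
    (hd : DifferentiableAt ℝ f x) : 0 ≤ deriv f x := by
  have h := hd.hasDerivAt
  rw [hasDerivAt_iff_tendsto_slope] at h
  refine ge_of_tendsto h ?_
  filter_upwards [self_mem_nhdsWithin] with y hy
  rw [slope_def_field, div_nonneg_iff]
  rcases lt_or_gt_of_ne (Ne.symm hy) with h1 | h1
  · exact Or.inl ⟨by simpa using hm h1.le, by linarith⟩
  · exact Or.inr ⟨by simpa using hm h1.le, by linarith⟩

private lemma hasDerivAt_iterate {f : ℝ → ℝ} (hf : Differentiable ℝ f) (n : ℕ) (x : ℝ) :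
    HasDerivAt (f^[n]) (∏ i ∈ Finset.range n, deriv f (f^[i] x)) x := by
  induction n with
  | zero => simpa using hasDerivAt_id x
  | succ n ih =>
      rw [Function.iterate_succ', Finset.prod_range_succ]
      have h1 : HasDerivAt f (deriv f (f^[n] x)) (f^[n] x) := (hf _).hasDerivAt
      simpa [mul_comm] using h1.comp x ih

private lemma kopell {a b c x₀ : ℝ} (F G : Equiv.Perm ℝ)
    (hab : a < b) (hc : c ∈ Set.Ioo a b) (hx₀ : x₀ ∈ Set.Ioo a b)
    (hF2 : ContDiff ℝ 2 ⇑F) (hF2s : ContDiff ℝ 2 ⇑F.symm) (hFm : StrictMono ⇑F)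
    (hFa : F a = a) (hFb : F b = b) (hFlt : ∀ x ∈ Set.Ioo a b, F x < x)
    (hG1 : ContDiff ℝ 1 ⇑G) (hG1s : ContDiff ℝ 1 ⇑G.symm) (hGm : StrictMono ⇑G)
    (hFG : Commute F G) (hGc : G c = c) (hGx : G x₀ < x₀) : False := by
  set f : ℝ → ℝ := ⇑F with hf
  have hFd : Differentiable ℝ f := hF2.differentiable (by norm_num)
  have hFcont : Continuous f := hFd.continuous
  have hFsm : StrictMono ⇑F.symm := by
    intro u v huv
    rcases lt_trichotomy (F.symm u) (F.symm v) with h | h | h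
    · exact h
    · exfalso
      have : u = v := by
        have := congrArg F h; simpa using this
      linarith
    · exfalso
      have := hFm h
      simp only [hf, Equiv.apply_symm_apply] at this
      linarith
  have hFsa : F.symm a = a := (Equiv.symm_apply_eq F).2 hFa.symm
  have hFsb : F.symm b = b := (Equiv.symm_apply_eq F).2 hFb.symm
  -- positivity of derivative
  have hDpos : ∀ x, 0 < deriv f x := by
    intro x
    have h1 : HasDerivAt (⇑F.symm ∘ f) (deriv ⇑F.symm (f x) * deriv f x) x :=
      ((hF2s.differentiable (by norm_num) (f x)).hasDerivAt).comp x (hFd x).hasDerivAt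
    have h2 : (⇑F.symm ∘ f) = id := by ext y; simp [hf]
    rw [h2] at h1
    have h3 : deriv ⇑F.symm (f x) * deriv f x = 1 := h1.unique (hasDerivAt_id x)
    have h4 : 0 ≤ deriv f x := deriv_nonneg_of_mono hFm.monotone (hFd x)
    rcases h4.lt_or_eq with h | h
    · exact h
    · rw [← h, mul_zero] at h3; norm_num at h3
  -- invariance of the interval
  have hmapIoo : ∀ x ∈ Ioo a b, F x ∈ Ioo a b := fun x hx =>
    ⟨by rw [← hFa]; exact hFm hx.1, (hFlt x hx).trans hx.2⟩
  have hmapIooS : ∀ x ∈ Ioo a b, F.symm x ∈ Ioo a b := fun x hx =>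
    ⟨by rw [← hFsa]; exact hFsm hx.1, by rw [← hFsb]; exact hFsm hx.2⟩
  have hFsgt : ∀ x ∈ Ioo a b, x < F.symm x := by
    intro x hx
    by_contra hcon
    push_neg at hcon
    have := hFm.monotone hcon
    simp only [hf, Equiv.apply_symm_apply] at this
    exact absurd (hFlt x hx) (not_lt.2 this)
  -- orbit convergence to a
  have hIterMem : ∀ x ∈ Ioo a b, ∀ n : ℕ, f^[n] x ∈ Ioo a b := by
    intro x hx n
    induction n with
    | zero => simpa using hx
    | succ n ih => rw [Function.iterate_succ_apply']; exact hmapIoo _ ih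
  have hIterTend : ∀ x ∈ Ioo a b, Tendsto (fun n => f^[n] x) atTop (𝓝 a) := by
    intro x hx
    have hanti : Antitone fun n => f^[n] x := by
      apply antitone_nat_of_succ_le
      intro n
      rw [Function.iterate_succ_apply']
      exact (hFlt _ (hIterMem x hx n)).le
    have hbdd : BddBelow (Set.range fun n => f^[n] x) :=
      ⟨a, by rintro y ⟨n, rfl⟩; exact (hIterMem x hx n).1.le⟩
    have htend : Tendsto (fun n => f^[n] x) atTop (𝓝 (⨅ n, f^[n] x)) :=
      tendsto_atTop_ciInf hanti hbdd
    set l := ⨅ n, f^[n] x with hl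
    have hla : a ≤ l := le_ciInf fun n => (hIterMem x hx n).1.le
    have hlx : l ≤ x := by simpa using ciInf_le hbdd 0
    have hfix : F l = l := by
      have h1 : Tendsto (fun n => F (f^[n] x)) atTop (𝓝 (F l)) :=
        (hFcont.tendsto l).comp htend
      have h2 : Tendsto (fun n => F (f^[n] x)) atTop (𝓝 l) := by
        have : (fun n => F (f^[n] x)) = (fun n => f^[n] x) ∘ (· + 1) := by
          ext n; simp [Function.iterate_succ_apply']; rfl
        rw [this]
        exact htend.comp (tendsto_add_atTop_nat 1)
      exact tendsto_nhds_unique h1 h2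
    rcases hla.lt_or_eq with h | h
    · exact absurd hfix (ne_of_lt (hFlt l ⟨h, lt_of_le_of_lt hlx hx.2⟩))
    · rw [h]; exact htend
  -- the bi-infinite orbit of c
  set φ : ℤ → ℝ := fun k => (F ^ k) c with hφ
  have hφsucc : ∀ k : ℤ, φ (k + 1) = F (φ k) := by
    intro k
    show (F ^ (k + 1)) c = F ((F ^ k) c)
    rw [add_comm, zpow_add, zpow_one]
    rfl
  have hφpred : ∀ k : ℤ, φ k = F.symm (φ (k + 1)) := by
    intro k; rw [hφsucc]; simp
  have hφmem : ∀ k : ℤ, φ k ∈ Ioo a b := by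
    intro k
    induction k using Int.induction_on with
    | zero => simpa [hφ] using hc
    | succ n ih => rw [hφsucc]; exact hmapIoo _ ih
    | pred n ih =>
        have : φ (-(n : ℤ) - 1) = F.symm (φ (-(n : ℤ))) := by
          rw [hφpred (-(n : ℤ) - 1)]; norm_num
        rw [this]; exact hmapIooS _ ih
  have hφdec : ∀ k : ℤ, φ (k + 1) < φ k := by
    intro k; rw [hφsucc]; exact hFlt _ (hφmem k)
  have hφanti : StrictAnti φ := strictAnti_int_of_succ_lt hφdec
  have hφnat : ∀ n : ℕ, φ (n : ℤ) = f^[n] c := by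
    intro n
    induction n with
    | zero => simp [hφ]
    | succ n ih => push_cast; rw [hφsucc, ih, Function.iterate_succ_apply']
  have hφnatTend : Tendsto (fun n : ℕ => φ (n : ℤ)) atTop (𝓝 a) := by
    simp_rw [hφnat]; exact hIterTend c hc
  -- φ(-n) tends to b
  have hφnegTend : Tendsto (fun n : ℕ => φ (-(n : ℤ))) atTop (𝓝 b) := by
    have hmem : ∀ n : ℕ, φ (-(n : ℤ)) ∈ Ioo a b := fun n => hφmem _
    have hmono : Monotone fun n : ℕ => φ (-(n : ℤ)) := by
      apply monotone_nat_of_le_succ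
      intro n
      have := hφdec (-(n : ℤ) - 1)
      have he : (-(n : ℤ) - 1) + 1 = -(n : ℤ) := by ring
      rw [he] at this
      have he2 : -((n : ℤ) + 1) = -(n : ℤ) - 1 := by ring
      push_cast
      rw [he2]
      exact this.le
    have hbdd : BddAbove (Set.range fun n : ℕ => φ (-(n : ℤ))) :=
      ⟨b, by rintro y ⟨n, rfl⟩; exact (hmem n).2.le⟩
    have htend : Tendsto (fun n : ℕ => φ (-(n : ℤ))) atTop (𝓝 (⨆ n : ℕ, φ (-(n : ℤ)))) :=
      tendsto_atTop_ciSup hmono hbdd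
    set l := ⨆ n : ℕ, φ (-(n : ℤ)) with hl
    have hlb : l ≤ b := ciSup_le fun n => (hmem n).2.le
    have hcl : c ≤ l := by
      have h0 : φ (-((0 : ℕ) : ℤ)) ≤ l := le_ciSup hbdd 0
      have hφ0 : φ (-((0 : ℕ) : ℤ)) = c := by
        show ((F ^ (-((0 : ℕ) : ℤ)))) c = c
        norm_num
      rwa [hφ0] at h0
    have hfix : F.symm l = l := by
      have h1 : Tendsto (fun n : ℕ => F.symm (φ (-(n : ℤ)))) atTop (𝓝 (F.symm l)) :=
        ((hF2s.continuous).tendsto l).comp htend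
      have h2 : Tendsto (fun n : ℕ => F.symm (φ (-(n : ℤ)))) atTop (𝓝 l) := by
        have heq : (fun n : ℕ => F.symm (φ (-(n : ℤ)))) = (fun n : ℕ => φ (-(n : ℤ))) ∘ (· + 1) := by
          ext n
          have : φ (-(n : ℤ) - 1) = F.symm (φ (-(n : ℤ))) := by
            rw [hφpred (-(n : ℤ) - 1)]; norm_num
          simp only [Function.comp_apply]
          rw [← this]
          congr 1
          push_cast
          ring
        rw [heq]
        exact htend.comp (tendsto_add_atTop_nat 1)
      exact tendsto_nhds_unique h1 h2
    have hfixF : F l = l := by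
      have := congrArg F hfix
      simpa using this.symm
    rcases hlb.lt_or_eq with h | h
    · exfalso
      have hlmem : l ∈ Ioo a b := ⟨lt_of_lt_of_le hc.1 hcl, h⟩
      exact absurd hfixF (ne_of_lt (hFlt l hlmem))
    · rw [h] at htend; exact htend
  -- covering by fundamental domains
  have hcover : ∀ x ∈ Ioo a b, ∃ k : ℤ, x ∈ Icc (φ (k + 1)) (φ k) := by
    intro x hx
    obtain ⟨N, hN⟩ : ∃ N : ℕ, φ (N : ℤ) < x :=
      (hφnatTend.eventually (eventually_lt_nhds hx.1)).exists
    obtain ⟨M, hM⟩ : ∃ M : ℕ, x < φ (-(M : ℤ)) :=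
      (hφnegTend.eventually (eventually_gt_nhds hx.2)).exists
    obtain ⟨k, hk, hkmax⟩ := Int.exists_greatest_of_bdd (P := fun z => x ≤ φ z)
      (⟨(N : ℤ), by
        intro z hz
        by_contra hcon
        push_neg at hcon
        have : φ z < φ (N : ℤ) := hφanti hcon
        exact absurd hz (not_le.2 (this.trans hN))⟩)
      ⟨-(M : ℤ), hM.le⟩
    refine ⟨k, ?_, hk⟩
    by_contra hcon
    push_neg at hcon
    have : (k + 1 : ℤ) ≤ k := hkmax _ hcon.le
    omega
  have hφsucc' : ∀ k : ℤ, φ (k + 1) = f (φ k) := hφsucc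
  -- constants
  set D : ℝ → ℝ := deriv f with hD
  have hDcont : Continuous D := hF2.continuous_deriv (by norm_num)
  have hD1 : ContDiff ℝ 1 D := by
    have h2 : ContDiff ℝ (1+1) f := by norm_num; exact hF2
    exact (contDiff_succ_iff_deriv.mp h2).2.2
  obtain ⟨xm, hxmI, hxm⟩ :=
    isCompact_Icc.exists_isMinOn (Set.nonempty_Icc.2 hab.le) hDcont.continuousOn
  set m := D xm with hm
  have hmpos : 0 < m := hDpos xm
  have hmle : ∀ y ∈ Icc a b, m ≤ D y := fun y hy => hxm hy
  obtain ⟨xB, hxBI, hxB⟩ := isCompact_Icc.exists_isMaxOn (Set.nonempty_Icc.2 hab.le)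
    ((hD1.continuous_deriv le_rfl).abs.continuousOn)
  set B := |deriv D xB| with hB
  have hBnn : 0 ≤ B := abs_nonneg _
  have hBle : ∀ y ∈ Icc a b, |deriv D y| ≤ B := fun y hy => hxB hy
  have hLip : ∀ s ∈ Icc a b, ∀ t ∈ Icc a b, |D s - D t| ≤ B * |s - t| := by
    intro s hs t ht
    have := Convex.norm_image_sub_le_of_norm_deriv_le (f := D)
      (fun y _ => (hD1.differentiable (by norm_num)) y) (fun y hy => hBle y hy) (convex_Icc a b) ht hs
    simpa [Real.norm_eq_abs] using this
  set C := B / m with hC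
  have hCnn : 0 ≤ C := div_nonneg hBnn hmpos.le
  have hmC : m * C = B := by rw [hC]; field_simp [hmpos.ne']
  set S := Real.exp (C * (b - a)) with hS
  have hSpos : 0 < S := Real.exp_pos _
  have hstep : ∀ s ∈ Icc a b, ∀ t ∈ Icc a b, ∀ L : ℝ, 0 ≤ L → |s - t| ≤ L →
      D s ≤ D t * Real.exp (C * L) := by
    intro s hs t ht L hL hst
    have h1 : D s ≤ D t + B * L := by
      have h2 := hLip s hs t ht
      have h3 : B * |s - t| ≤ B * L := mul_le_mul_of_nonneg_left hst hBnn
      have h4 := le_abs_self (D s - D t)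
      linarith
    have h5 : C * L + 1 ≤ Real.exp (C * L) := Real.add_one_le_exp _
    have h6 : m ≤ D t := hmle t ht
    nlinarith [mul_le_mul_of_nonneg_left h5 (hDpos t).le, mul_nonneg hCnn hL]
  -- the products of derivatives along orbits
  set P : ℕ → ℝ → ℝ := fun n x => ∏ i ∈ Finset.range n, D (f^[i] x) with hPdef
  have hPpos : ∀ n x, 0 < P n x := fun n x => Finset.prod_pos fun i _ => hDpos _
  have hiterIcc : ∀ (k : ℤ) (z : ℝ), z ∈ Icc (φ (k+1)) (φ k) → ∀ i : ℕ,
      f^[i] z ∈ Icc (φ (k + i + 1)) (φ (k + i)) := by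
    intro k z hz i
    induction i with
    | zero => simpa using hz
    | succ i ih =>
        rw [Function.iterate_succ_apply']
        have e1 : f (φ (k + i + 1)) = φ (k + i + 1 + 1) := (hφsucc' _).symm
        have e2 : f (φ (k + i)) = φ (k + i + 1) := (hφsucc' _).symm
        constructor
        · have h1 := hFm.monotone ih.1
          rw [e1] at h1
          refine le_trans (le_of_eq ?_) h1
          congr 1
          push_cast
          ring
        · have h2 := hFm.monotone ih.2
          rw [e2] at h2
          refine le_trans h2 (le_of_eq ?_)
          congr 1
          push_cast
          ring
  have hIccSub : ∀ j : ℤ, Icc (φ (j+1)) (φ j) ⊆ Icc a b := fun j z hz =>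
    ⟨(hφmem (j+1)).1.le.trans hz.1, hz.2.trans (hφmem j).2.le⟩
  have hProdBound : ∀ (k : ℤ) (x y : ℝ), x ∈ Icc (φ (k+1)) (φ k) → y ∈ Icc (φ (k+1)) (φ k) →
      ∀ n : ℕ, P n x ≤ S * P n y := by
    intro k x y hx hy n
    have hlen : ∀ i : ℕ, (0:ℝ) ≤ φ (k + i) - φ (k + i + 1) := fun i => by
      have := hφdec (k + i); linarith
    have key : ∀ i ∈ Finset.range n,
        D (f^[i] x) ≤ D (f^[i] y) * Real.exp (C * (φ (k + i) - φ (k + i + 1))) := by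
      intro i _
      have hxi := hiterIcc k x hx i
      have hyi := hiterIcc k y hy i
      refine hstep _ (hIccSub (k+i) ?_) _ (hIccSub (k+i) ?_) _ (hlen i) ?_
      · exact hxi
      · exact hyi
      · rw [abs_le]
        constructor
        · have := hxi.1; have := hyi.2; linarith
        · have := hxi.2; have := hyi.1; linarith
    calc P n x ≤ ∏ i ∈ Finset.range n,
          (D (f^[i] y) * Real.exp (C * (φ (k + i) - φ (k + i + 1)))) :=
        Finset.prod_le_prod (fun i _ => (hDpos _).le) key
      _ = P n y * ∏ i ∈ Finset.range n, Real.exp (C * (φ (k + i) - φ (k + i + 1))) :=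
        Finset.prod_mul_distrib
      _ = P n y * Real.exp (∑ i ∈ Finset.range n, C * (φ (k + i) - φ (k + i + 1))) := by
        rw [Real.exp_sum]
      _ ≤ P n y * S := by
        apply mul_le_mul_of_nonneg_left _ (hPpos n y).le
        rw [hS]
        apply Real.exp_le_exp.2
        rw [← Finset.mul_sum]
        apply mul_le_mul_of_nonneg_left _ hCnn
        have htel : ∑ i ∈ Finset.range n, (φ (k + i) - φ (k + i + 1)) = φ k - φ (k + n) := by
          have hg : ∀ i : ℕ, φ (k + i + 1) = φ (k + (i+1 : ℕ)) := by
            intro i; congr 1; push_cast; ring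
          calc ∑ i ∈ Finset.range n, (φ (k + i) - φ (k + i + 1))
              = ∑ i ∈ Finset.range n, ((fun j : ℕ => φ (k + j)) i
                  - (fun j : ℕ => φ (k + j)) (i+1)) := by
                apply Finset.sum_congr rfl
                intro i _
                simp only []
                rw [hg i]
            _ = φ (k + (0:ℕ)) - φ (k + n) := Finset.sum_range_sub' (fun j : ℕ => φ (k + j)) n
            _ = φ k - φ (k + n) := by norm_num
        rw [htel]
        have h1 := (hφmem k).2
        have h2 := (hφmem (k + n)).1
        linarith
      _ = S * P n y := mul_comm _ _
  -- any commuting perm fixing c fixes the whole orbit of c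
  have hfixφ : ∀ H : Equiv.Perm ℝ, Commute F H → H c = c → ∀ k : ℤ, H (φ k) = φ k := by
    intro H hcomm hc'
    have happ : ∀ z : ℝ, H (F z) = F (H z) := by
      intro z
      have := congrArg (fun σ : Equiv.Perm ℝ => σ z) hcomm.eq
      simpa [Equiv.Perm.mul_apply] using this.symm
    have happS : ∀ z : ℝ, H (F.symm z) = F.symm (H z) := by
      intro z
      have h1 := happ (F.symm z)
      rw [Equiv.apply_symm_apply] at h1
      have h2 : F.symm (H z) = H (F.symm z) := by rw [h1]; simp
      exact h2.symm
    intro k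
    induction k using Int.induction_on with
    | zero => simpa [hφ] using hc'
    | succ n ih => rw [hφsucc, happ, ih]
    | pred n ih =>
        have hpred : φ (-(n:ℤ) - 1) = F.symm (φ (-(n:ℤ))) := by
          rw [hφpred (-(n:ℤ) - 1)]; norm_num
        rw [hpred, happS, ih]
  -- the centralizer derivative bound
  have hbound : ∀ H : Equiv.Perm ℝ, ContDiff ℝ 1 ⇑H → StrictMono ⇑H → Commute F H → H c = c →
      ∀ x ∈ Ioo a b, deriv ⇑H x ≤ S := by
    intro H hH1 hHm hcomm hc' x hx
    have hHd : Differentiable ℝ ⇑H := hH1.differentiable (by norm_num)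
    have hHfix := hfixφ H hcomm hc'
    have happ : ∀ z : ℝ, H (f z) = f (H z) := by
      intro z
      have := congrArg (fun σ : Equiv.Perm ℝ => σ z) hcomm.eq
      simpa [Equiv.Perm.mul_apply] using this.symm
    have hHa : H a = a := by
      have h1 : Tendsto (fun n : ℕ => H (φ (n:ℤ))) atTop (𝓝 (H a)) :=
        ((hH1.continuous).tendsto a).comp hφnatTend
      have h2 : (fun n : ℕ => H (φ (n:ℤ))) = fun n : ℕ => φ (n:ℤ) := by
        ext n; exact hHfix _
      rw [h2] at h1
      exact tendsto_nhds_unique h1 hφnatTend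
    have hHda : deriv ⇑H a = 1 := by
      have hder := (hHd a).hasDerivAt
      rw [hasDerivAt_iff_tendsto_slope] at hder
      have hseq : Tendsto (fun n : ℕ => φ (n:ℤ)) atTop (𝓝[≠] a) := by
        apply tendsto_nhdsWithin_of_tendsto_nhds_of_eventually_within _ hφnatTend
        filter_upwards with n
        exact ne_of_gt (hφmem _).1
      have h3 : Tendsto ((slope ⇑H a) ∘ (fun n : ℕ => φ (n:ℤ))) atTop (𝓝 (deriv ⇑H a)) :=
        hder.comp hseq
      have h4 : ((slope ⇑H a) ∘ (fun n : ℕ => φ (n:ℤ))) = fun _ : ℕ => (1:ℝ) := by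
        ext n
        simp only [Function.comp_apply, slope_def_field]
        rw [hHfix, hHa]
        exact div_self (sub_ne_zero.2 (ne_of_gt (hφmem _).1))
      rw [h4] at h3
      exact tendsto_nhds_unique h3 tendsto_const_nhds
    have hchain : ∀ (n : ℕ) (z : ℝ),
        deriv ⇑H (f^[n] z) * P n z = P n (H z) * deriv ⇑H z := by
      intro n z
      have hcomm_iter : ⇑H ∘ f^[n] = f^[n] ∘ ⇑H := by
        induction n with
        | zero => rfl
        | succ n ih =>
            rw [Function.iterate_succ']
            calc ⇑H ∘ (f ∘ f^[n]) = (⇑H ∘ f) ∘ f^[n] := rfl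
              _ = (f ∘ ⇑H) ∘ f^[n] := by ext z'; exact happ _
              _ = f ∘ (⇑H ∘ f^[n]) := rfl
              _ = f ∘ (f^[n] ∘ ⇑H) := by rw [ih]
              _ = (f ∘ f^[n]) ∘ ⇑H := rfl
      have h1 : HasDerivAt (⇑H ∘ f^[n]) (deriv ⇑H (f^[n] z) * P n z) z :=
        ((hHd _).hasDerivAt).comp z (hasDerivAt_iterate hFd n z)
      have h2 : HasDerivAt (f^[n] ∘ ⇑H) (P n (H z) * deriv ⇑H z) z :=
        (hasDerivAt_iterate hFd n (H z)).comp z (hHd z).hasDerivAt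
      rw [hcomm_iter] at h1
      exact h1.unique h2
    obtain ⟨k, hk⟩ := hcover x hx
    have hHxmem : H x ∈ Icc (φ (k+1)) (φ k) := by
      constructor
      · have := hHm.monotone hk.1; rwa [hHfix] at this
      · have := hHm.monotone hk.2; rwa [hHfix] at this
    have hmain : ∀ n : ℕ, deriv ⇑H x ≤ deriv ⇑H (f^[n] x) * S := by
      intro n
      have hid := hchain n x
      have hPB := hProdBound k x (H x) hk hHxmem n
      have hd0 : 0 ≤ deriv ⇑H (f^[n] x) := deriv_nonneg_of_mono hHm.monotone (hHd _)
      have hppos := hPpos n (H x)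
      have hkey : deriv ⇑H x * P n (H x) ≤ (deriv ⇑H (f^[n] x) * S) * P n (H x) := by
        calc deriv ⇑H x * P n (H x) = deriv ⇑H (f^[n] x) * P n x := by
              rw [mul_comm]; exact hid.symm
          _ ≤ deriv ⇑H (f^[n] x) * (S * P n (H x)) := mul_le_mul_of_nonneg_left hPB hd0
          _ = (deriv ⇑H (f^[n] x) * S) * P n (H x) := by ring
      exact le_of_mul_le_mul_right hkey hppos
    have htendD : Tendsto (fun n : ℕ => deriv ⇑H (f^[n] x) * S) atTop (𝓝 (1 * S)) := by
      apply Tendsto.mul_const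
      have hcd : Continuous (deriv ⇑H) := hH1.continuous_deriv le_rfl
      have h5 := (hcd.tendsto a).comp (hIterTend x hx)
      rw [hHda] at h5
      exact h5
    have := ge_of_tendsto htendD (Eventually.of_forall hmain)
    linarith
  -- endgame : contradiction via mean value theorem on inverse powers of G
  have hGsm : StrictMono ⇑G.symm := by
    intro p q hpq
    rcases lt_trichotomy (G.symm p) (G.symm q) with h | h | h
    · exact h
    · exfalso
      have : p = q := by have := congrArg G h; simpa using this
      linarith
    · exfalso
      have := hGm h
      simp only [Equiv.apply_symm_apply] at this
      linarith
  obtain ⟨k₀, hk₀⟩ := hcover x₀ hx₀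
  set u : ℕ → ℝ := fun mm => ((G ^ mm : Equiv.Perm ℝ)) x₀ with hu
  have hGpowMono : ∀ mm : ℕ, StrictMono ⇑(G ^ mm) := by
    intro mm
    induction mm with
    | zero =>
        have h0 : ⇑(G ^ 0 : Equiv.Perm ℝ) = id := by ext z; simp
        rw [h0]; exact strictMono_id
    | succ n ih =>
        have h1 : ⇑(G ^ (n+1) : Equiv.Perm ℝ) = ⇑(G ^ n) ∘ ⇑G := by
          ext z; simp [pow_succ, Equiv.Perm.mul_apply]
        rw [h1]; exact ih.comp hGm
  have hGfixφ := hfixφ G hFG hGc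
  have hGpowfix : ∀ (mm : ℕ) (k : ℤ), (G ^ mm) (φ k) = φ k := by
    intro mm k
    induction mm with
    | zero => simp
    | succ n ih => rw [pow_succ, Equiv.Perm.mul_apply, hGfixφ, ih]
  have hu_mem : ∀ mm : ℕ, u mm ∈ Icc (φ (k₀+1)) (φ k₀) := by
    intro mm
    constructor
    · have := (hGpowMono mm).monotone hk₀.1
      rwa [hGpowfix] at this
    · have := (hGpowMono mm).monotone hk₀.2
      rwa [hGpowfix] at this
  have hu_succ : ∀ mm : ℕ, u (mm+1) = (G ^ mm) (G x₀) := by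
    intro mm
    show (G ^ (mm+1)) x₀ = _
    rw [pow_succ, Equiv.Perm.mul_apply]
  have hu_dec : ∀ mm : ℕ, u (mm+1) < u mm := by
    intro mm; rw [hu_succ]; exact hGpowMono mm hGx
  have hu_anti : Antitone u := antitone_nat_of_succ_le fun n => (hu_dec n).le
  have hu_tend : Tendsto u atTop (𝓝 (⨅ mm, u mm)) :=
    tendsto_atTop_ciInf hu_anti ⟨φ (k₀+1), by rintro y ⟨mm, rfl⟩; exact (hu_mem mm).1⟩
  have hdiff0 : Tendsto (fun mm => S * (u mm - u (mm+1))) atTop (𝓝 0) := by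
    have h2 : Tendsto (fun mm => u (mm+1)) atTop (𝓝 (⨅ mm, u mm)) :=
      hu_tend.comp (tendsto_add_atTop_nat 1)
    have h3 := hu_tend.sub h2
    rw [sub_self] at h3
    simpa using h3.const_mul S
  have hGsc : G⁻¹ c = c := by
    have h : G⁻¹ (G c) = c := Equiv.symm_apply_apply G c
    rwa [hGc] at h
  have hGinvfixc : ∀ mm : ℕ, ((G⁻¹ ^ mm)) c = c := by
    intro mm
    induction mm with
    | zero => simp
    | succ n ih => rw [pow_succ, Equiv.Perm.mul_apply, hGsc, ih]
  have hGinv1 : ∀ mm : ℕ, ContDiff ℝ 1 ⇑(G⁻¹ ^ mm) ∧ StrictMono ⇑(G⁻¹ ^ mm) := by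
    intro mm
    induction mm with
    | zero =>
        have h0 : ⇑(G⁻¹ ^ 0 : Equiv.Perm ℝ) = id := by ext z; simp
        rw [h0]
        exact ⟨contDiff_id, strictMono_id⟩
    | succ n ih =>
        have h1 : ⇑(G⁻¹ ^ (n+1) : Equiv.Perm ℝ) = ⇑(G⁻¹ ^ n) ∘ ⇑G.symm := by
          ext z; simp [pow_succ, Equiv.Perm.mul_apply, Equiv.Perm.inv_def]
        rw [h1]
        exact ⟨ih.1.comp hG1s, ih.2.comp hGsm⟩
  have hcommInv : ∀ mm : ℕ, Commute F (G⁻¹ ^ mm) := fun mm => (hFG.inv_right).pow_right mm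
  have hSb : ∀ (mm : ℕ) (y : ℝ), y ∈ Ioo a b → deriv ⇑(G⁻¹ ^ mm) y ≤ S := fun mm y hy =>
    hbound _ (hGinv1 mm).1 (hGinv1 mm).2 (hcommInv mm) (hGinvfixc mm) y hy
  have hIoo_sub : ∀ mm : ℕ, Ioo (u (mm+1)) (u mm) ⊆ Ioo a b := by
    intro mm z hz
    constructor
    · exact lt_of_lt_of_le (hφmem (k₀+1)).1 (hu_mem (mm+1)).1 |>.trans hz.1
    · exact hz.2.trans (lt_of_le_of_lt (hu_mem mm).2 (hφmem k₀).2)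
  have hMVT : ∀ mm : ℕ, x₀ - G x₀ ≤ S * (u mm - u (mm+1)) := by
    intro mm
    have hWcont : ContinuousOn ⇑(G⁻¹ ^ mm) (Icc (u (mm+1)) (u mm)) :=
      ((hGinv1 mm).1.continuous).continuousOn
    have hWdiff : DifferentiableOn ℝ ⇑(G⁻¹ ^ mm) (Ioo (u (mm+1)) (u mm)) :=
      ((hGinv1 mm).1.differentiable (by norm_num)).differentiableOn
    obtain ⟨ξ, hξmem, hξeq⟩ := exists_deriv_eq_slope ⇑(G⁻¹ ^ mm) (hu_dec mm) hWcont hWdiff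
    have hWum : (G⁻¹ ^ mm) (u mm) = x₀ := by
      show (G⁻¹ ^ mm) ((G ^ mm) x₀) = x₀
      rw [inv_pow]
      exact Equiv.symm_apply_apply _ _
    have hWum1 : (G⁻¹ ^ mm) (u (mm+1)) = G x₀ := by
      have h1 : u (mm+1) = (G ^ mm) (G x₀) := hu_succ mm
      rw [h1, inv_pow]
      exact Equiv.symm_apply_apply _ _
    have hξS : deriv ⇑(G⁻¹ ^ mm) ξ ≤ S := hSb mm ξ (hIoo_sub mm hξmem)
    rw [hWum, hWum1] at hξeq
    rw [hξeq] at hξS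
    have hden : 0 < u mm - u (mm+1) := sub_pos.2 (hu_dec mm)
    exact (div_le_iff₀ hden).1 hξS
  have hfin := ge_of_tendsto hdiff0 (Eventually.of_forall hMVT)
  linarith

private lemma symm_strictMono {G : Equiv.Perm ℝ} (h : StrictMono ⇑G) : StrictMono ⇑G.symm := by
  intro p q hpq
  rcases lt_trichotomy (G.symm p) (G.symm q) with h1 | h1 | h1
  · exact h1
  · exfalso
    have : p = q := by have := congrArg G h1; simpa using this
    linarith
  · exfalso
    have := h h1
    simp only [Equiv.apply_symm_apply] at this
    linarith


/-- Lemma 5.2: for g ∈ Diff_c²(ℝ), the centralizer of g in Diff_c²(ℝ) equals the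
centralizer of g². -/
theorem centralizer_sq_eq_centralizer_diffc (g : Equiv.Perm ℝ) (hg : IsRDiffc g) :
    ∀ h : Equiv.Perm ℝ, IsRDiffc h → (Commute g h ↔ Commute (g * g) h) := by
  obtain ⟨hg2, hg2s, hgm, K, hK, hKfix⟩ := hg
  intro h hh
  obtain ⟨hh2, hh2s, hhm, -⟩ := hh
  constructor
  · intro hc; exact hc.mul_left hc
  · intro hc2
    have hgsm := symm_strictMono hgm
    have hhsm := symm_strictMono hhm
    set u : Equiv.Perm ℝ := h⁻¹ * g * h with hudef
    have hu2 : u * u = g * g := by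
      have e : h⁻¹ * ((g * g) * h) = h⁻¹ * (h * (g * g)) := by rw [hc2.eq]
      calc u * u = h⁻¹ * ((g * g) * h) := by rw [hudef]; group
        _ = h⁻¹ * (h * (g * g)) := e
        _ = g * g := by group
    set f : Equiv.Perm ℝ := g⁻¹ * u with hfdef
    have hgu : g * f = u := by rw [hfdef]; group
    have hR1 : f * (g * f) = g := by
      have e1 : g * (f * (g * f)) = g * g := by
        calc g * (f * (g * f)) = (g * f) * (g * f) := by group
          _ = u * u := by rw [hgu]
          _ = g * g := hu2
      exact mul_left_cancel e1
    have hcomm2 : Commute (g * g) f := by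
      have hcu : Commute (g * g) u := by
        rw [← hu2]; exact (Commute.refl u).mul_left (Commute.refl u)
      have hcg : Commute (g * g) g⁻¹ :=
        ((Commute.refl g).mul_left (Commute.refl g)).inv_right
      exact hcg.mul_right hcu
    -- regularity of u and f
    have huc : ⇑u = ⇑h.symm ∘ (⇑g ∘ ⇑h) := by
      ext z; simp [hudef, Equiv.Perm.mul_apply, Equiv.Perm.inv_def]
    have hum : StrictMono ⇑u := by rw [huc]; exact hhsm.comp (hgm.comp hhm)
    have hfc : ⇑f = ⇑g.symm ∘ (⇑h.symm ∘ (⇑g ∘ ⇑h)) := by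
      ext z; simp [hfdef, hudef, Equiv.Perm.mul_apply, Equiv.Perm.inv_def]
    have hf2 : ContDiff ℝ 2 ⇑f := by
      rw [hfc]; exact hg2s.comp (hh2s.comp (hg2.comp hh2))
    have hfm : StrictMono ⇑f := by
      rw [hfc]; exact hgsm.comp (hhsm.comp (hgm.comp hhm))
    have hfsc : ⇑f.symm = ⇑h.symm ∘ (⇑g.symm ∘ (⇑h ∘ ⇑g)) := by
      have hfsym : f⁻¹ = h⁻¹ * g⁻¹ * h * g := by rw [hfdef, hudef]; group
      ext z
      have : f.symm z = (f⁻¹ : Equiv.Perm ℝ) z := rfl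
      rw [this, hfsym]
      simp [Equiv.Perm.mul_apply, Equiv.Perm.inv_def]
    have hf2s : ContDiff ℝ 2 ⇑f.symm := by
      rw [hfsc]; exact hh2s.comp (hg2s.comp (hh2.comp hg2))
    -- fixed points of g are fixed by u and f
    have hfixgu : ∀ x, g x = x → u x = x := by
      intro x hx
      have h2 : u (u x) = x := by
        have : (u * u) x = (g * g) x := by rw [hu2]
        simpa [Equiv.Perm.mul_apply, hx] using this
      rcases lt_trichotomy (u x) x with hlt | heq | hgt
      · exfalso; have := hum hlt; linarith
      · exact heq
      · exfalso; have := hum hgt; linarith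
    have hginvfix : ∀ x, g x = x → g⁻¹ x = x := by
      intro x hx
      have h1 : g⁻¹ (g x) = x := Equiv.symm_apply_apply g x
      rwa [hx] at h1
    have hfixgf : ∀ x, g x = x → f x = x := by
      intro x hx
      have h1 := hfixgu x hx
      have h2 : f x = g⁻¹ (u x) := by simp [hfdef, Equiv.Perm.mul_apply]
      rw [h2, h1]
      exact hginvfix x hx
    -- main goal reduction
    suffices hf1 : f = 1 by
      have hug : u = g := by
        have : g⁻¹ * u = 1 := by rw [← hfdef]; exact hf1
        rw [inv_mul_eq_one] at this; exact this.symm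
      have hgh : h⁻¹ * g * h = g := by rw [← hudef]; exact hug
      show g * h = h * g
      calc g * h = h * (h⁻¹ * g * h) := by group
        _ = h * g := by rw [hgh]
    by_contra hne
    have hex : ∃ x : ℝ, f x ≠ x := by
      by_contra hal; push_neg at hal
      exact hne (Equiv.ext fun z => by simpa using hal z)
    obtain ⟨x₀, hx₀ne⟩ := hex
    have hgx₀ : g x₀ ≠ x₀ := fun hx => hx₀ne (hfixgf _ hx)
    -- the component (a, b) of the complement of Fix(g) containing x₀
    have hFixClosed : IsClosed {y : ℝ | g y = y} := isClosed_eq hg2.continuous continuous_id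
    obtain ⟨lo, hlo⟩ := hK.bddBelow
    obtain ⟨hi, hhi⟩ := hK.bddAbove
    set A : Set ℝ := {y : ℝ | g y = y} ∩ Iic x₀ with hA
    have hAne : A.Nonempty := by
      refine ⟨min lo x₀ - 1, ?_, ?_⟩
      · apply hKfix
        intro hmem
        have := hlo hmem
        have h1 : min lo x₀ - 1 ≤ lo - 1 := by
          have := min_le_left lo x₀; linarith
        linarith
      · have := min_le_right lo x₀
        simp only [mem_Iic]; linarith
    have hAbdd : BddAbove A := ⟨x₀, fun y hy => hy.2⟩
    have hAclosed : IsClosed A := hFixClosed.inter isClosed_Iic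
    set a : ℝ := sSup A with ha
    have haA : a ∈ A := hAclosed.csSup_mem hAne hAbdd
    have hax : a < x₀ := lt_of_le_of_ne haA.2 (by intro e; exact hgx₀ (by rw [← e]; exact haA.1))
    set Bv : Set ℝ := {y : ℝ | g y = y} ∩ Ici x₀ with hBv
    have hBne : Bv.Nonempty := by
      refine ⟨max hi x₀ + 1, ?_, ?_⟩
      · apply hKfix
        intro hmem
        have := hhi hmem
        have h1 : hi + 1 ≤ max hi x₀ + 1 := by
          have := le_max_left hi x₀; linarith
        linarith
      · have := le_max_right hi x₀
        simp only [mem_Ici]; linarith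
    have hBbdd : BddBelow Bv := ⟨x₀, fun y hy => hy.2⟩
    have hBclosed : IsClosed Bv := hFixClosed.inter isClosed_Ici
    set b : ℝ := sInf Bv with hb
    have hbB : b ∈ Bv := hBclosed.csInf_mem hBne hBbdd
    have hxb : x₀ < b :=
      lt_of_le_of_ne hbB.2 (by intro e; exact hgx₀ (by rw [e]; exact hbB.1))
    have hab : a < b := hax.trans hxb
    have hx₀Ioo : x₀ ∈ Ioo a b := ⟨hax, hxb⟩
    have hnofix : ∀ y ∈ Ioo a b, g y ≠ y := by
      intro y hy hgy
      rcases le_or_gt y x₀ with hle | hlt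
      · have : y ≤ a := le_csSup hAbdd ⟨hgy, hle⟩
        linarith [hy.1]
      · have : b ≤ y := csInf_le hBbdd ⟨hgy, hlt.le⟩
        linarith [hy.2]
    -- sign propagation on the interval
    have hsign : ∀ (σ : Equiv.Perm ℝ), Continuous ⇑σ → (∀ y ∈ Ioo a b, σ y ≠ y) →
        ∀ y ∈ Ioo a b, ∀ z ∈ Ioo a b, σ y < y → σ z < z := by
      intro σ hσc hσne y hy z hz hyy
      by_contra hcon
      push_neg at hcon
      have hzlt : z < σ z := lt_of_le_of_ne hcon (Ne.symm (hσne z hz))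
      set ψ : ℝ → ℝ := fun t => σ t - t with hψ
      have hψc : ContinuousOn ψ (uIcc y z) := (hσc.sub continuous_id).continuousOn
      have h0 : (0:ℝ) ∈ uIcc (ψ y) (ψ z) := by
        rw [Set.mem_uIcc]
        left
        constructor
        · simp only [hψ]; linarith
        · simp only [hψ]; linarith
      obtain ⟨w, hw, hw0⟩ := intermediate_value_uIcc hψc h0
      have hwmem : w ∈ Ioo a b := (Set.ordConnected_Ioo).uIcc_subset hy hz hw
      have hwfix : σ w = w := by
        have : σ w - w = 0 := hw0
        linarith
      exact hσne w hwmem hwfix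
    -- g maps the interval into itself
    have hga : g a = a := haA.1
    have hgb : g b = b := hbB.1
    have hgIoo : ∀ y ∈ Ioo a b, g y ∈ Ioo a b := fun y hy =>
      ⟨by rw [← hga]; exact hgm hy.1, by rw [← hgb]; exact hgm hy.2⟩
    -- construct the contracting map F
    obtain ⟨F, hFf, hF2, hF2s, hFm, hFa, hFb, hFlt⟩ :
        ∃ F : Equiv.Perm ℝ, Commute F f ∧ ContDiff ℝ 2 ⇑F ∧ ContDiff ℝ 2 ⇑F.symm ∧
          StrictMono ⇑F ∧ F a = a ∧ F b = b ∧ ∀ y ∈ Ioo a b, F y < y := by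
      have hggc : ⇑(g * g) = ⇑g ∘ ⇑g := by ext z; simp [Equiv.Perm.mul_apply]
      have hggsc : ⇑(g * g).symm = ⇑g.symm ∘ ⇑g.symm := by
        ext z
        show (g * g)⁻¹ z = _
        rw [mul_inv_rev]
        simp [Equiv.Perm.mul_apply, Equiv.Perm.inv_def]
      rcases lt_or_gt_of_ne hgx₀ with hlt | hgt
      · -- g is below the identity on (a,b)
        have hgsign : ∀ y ∈ Ioo a b, g y < y := fun y hy =>
          hsign g hg2.continuous hnofix x₀ hx₀Ioo y hy hlt
        refine ⟨g * g, hcomm2, ?_, ?_, ?_, ?_, ?_, ?_⟩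
        · rw [hggc]; exact hg2.comp hg2
        · rw [hggsc]; exact hg2s.comp hg2s
        · intro p q hpq
          simp only [Equiv.Perm.mul_apply]
          exact hgm (hgm hpq)
        · simp [Equiv.Perm.mul_apply, hga]
        · simp [Equiv.Perm.mul_apply, hgb]
        · intro y hy
          have h1 := hgsign y hy
          have h2 := hgsign (g y) (hgIoo y hy)
          simp only [Equiv.Perm.mul_apply]
          linarith
      · -- g is above the identity on (a,b)
        have hgsign : ∀ y ∈ Ioo a b, y < g y := by
          intro y hy
          rcases lt_trichotomy (g y) y with hl | he | hg'
          · exfalso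
            have := hsign g hg2.continuous hnofix y hy x₀ hx₀Ioo hl
            linarith
          · exact absurd he (hnofix y hy)
          · exact hg'
        have hginvsign : ∀ y ∈ Ioo a b, g⁻¹ y < y := by
          intro y hy
          by_contra hcon
          push_neg at hcon
          have h1 := hgm.monotone hcon
          rw [Equiv.Perm.inv_def, Equiv.apply_symm_apply] at h1
          exact absurd (hgsign y hy) (not_lt.2 h1)
        have hginvIoo : ∀ y ∈ Ioo a b, g⁻¹ y ∈ Ioo a b := by
          intro y hy
          constructor
          · have : g⁻¹ a = a := hginvfix a hga
            rw [← this]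
            exact (symm_strictMono hgm) hy.1
          · exact (hginvsign y hy).trans hy.2
        refine ⟨(g * g)⁻¹, hcomm2.inv_left, ?_, ?_, ?_, ?_, ?_, ?_⟩
        · show ContDiff ℝ 2 ⇑(g * g).symm
          rw [hggsc]; exact hg2s.comp hg2s
        · show ContDiff ℝ 2 ⇑(g * g).symm.symm
          rw [Equiv.symm_symm, hggc]; exact hg2.comp hg2
        · show StrictMono ⇑(g * g).symm
          exact symm_strictMono (by
            intro p q hpq
            simp only [Equiv.Perm.mul_apply]
            exact hgm (hgm hpq))
        · show (g * g).symm a = a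
          have : (g * g) a = a := by simp [Equiv.Perm.mul_apply, hga]
          exact (Equiv.symm_apply_eq _).2 this.symm
        · show (g * g).symm b = b
          have : (g * g) b = b := by simp [Equiv.Perm.mul_apply, hgb]
          exact (Equiv.symm_apply_eq _).2 this.symm
        · intro y hy
          show (g * g).symm y < y
          have h1 : (g * g).symm y = g⁻¹ (g⁻¹ y) := by
            show (g * g)⁻¹ y = _
            rw [mul_inv_rev]
            simp [Equiv.Perm.mul_apply]
          rw [h1]
          have h2 := hginvsign y hy
          have h3 := hginvsign (g⁻¹ y) (hginvIoo y hy)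
          linarith
    -- f fixes the endpoints
    have hfa : f a = a := hfixgf a hga
    have hfb : f b = b := hfixgf b hgb
    have hfIoo : ∀ y ∈ Ioo a b, f y ∈ Ioo a b := fun y hy =>
      ⟨by rw [← hfa]; exact hfm hy.1, by rw [← hfb]; exact hfm hy.2⟩
    have hx₀IooF : x₀ ∈ Ioo a b := hx₀Ioo
    -- f has a fixed point in (a,b)
    have hR1app : ∀ y, f (g (f y)) = g y := by
      intro y
      have := congrArg (fun σ : Equiv.Perm ℝ => σ y) hR1
      simpa [Equiv.Perm.mul_apply] using this
    have hcex : ∃ c ∈ Ioo a b, f c = c := by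
      by_contra hcon
      push_neg at hcon
      rcases lt_trichotomy (f x₀) x₀ with hlt | heq | hgt
      · -- f < id on (a,b)
        have hfsign : ∀ y ∈ Ioo a b, f y < y := fun y hy =>
          hsign f hf2.continuous (fun y hy e => hcon y hy e) x₀ hx₀Ioo y hy hlt
        have hz : f x₀ ∈ Ioo a b := hfIoo x₀ hx₀Ioo
        have hgz : g (f x₀) ∈ Ioo a b := hgIoo _ hz
        have h1 : f (g (f x₀)) < g (f x₀) := hfsign _ hgz
        rw [hR1app] at h1
        have h2 : x₀ < f x₀ := by
          have := hgm.lt_iff_lt.1 h1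
          exact this
        linarith
      · exact hx₀ne heq
      · -- f > id on (a,b)
        have hfsign : ∀ y ∈ Ioo a b, y < f y := by
          intro y hy
          rcases lt_trichotomy (f y) y with hl | he | hg' 
          · exfalso
            have := hsign f hf2.continuous (fun y hy e => hcon y hy e) y hy x₀ hx₀Ioo hl
            linarith
          · exact absurd he (hcon y hy)
          · exact hg'
        have hz : f x₀ ∈ Ioo a b := hfIoo x₀ hx₀Ioo
        have hgz : g (f x₀) ∈ Ioo a b := hgIoo _ hz
        have h1 : g (f x₀) < f (g (f x₀)) := hfsign _ hgz
        rw [hR1app] at h1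
        have h2 : f x₀ < x₀ := by
          have := hgm.lt_iff_lt.1 h1
          exact this
        linarith
    obtain ⟨c, hcIoo, hfcfix⟩ := hcex
    -- construct G with G x₀ < x₀
    obtain ⟨G, hG1, hG1s, hGm2, hGcomm, hGc, hGx⟩ :
        ∃ G : Equiv.Perm ℝ, ContDiff ℝ 1 ⇑G ∧ ContDiff ℝ 1 ⇑G.symm ∧ StrictMono ⇑G ∧
          Commute F G ∧ G c = c ∧ G x₀ < x₀ := by
      rcases lt_or_gt_of_ne hx₀ne with hlt | hgt
      · exact ⟨f, hf2.of_le (by norm_num), hf2s.of_le (by norm_num), hfm,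
          hFf, hfcfix, hlt⟩
      · refine ⟨f⁻¹, ?_, ?_, symm_strictMono hfm, hFf.inv_right, ?_, ?_⟩
        · show ContDiff ℝ 1 ⇑f.symm
          exact hf2s.of_le (by norm_num)
        · show ContDiff ℝ 1 ⇑f.symm.symm
          rw [Equiv.symm_symm]
          exact hf2.of_le (by norm_num)
        · show f.symm c = c
          exact (Equiv.symm_apply_eq _).2 hfcfix.symm
        · show f.symm x₀ < x₀
          by_contra hcon2
          push_neg at hcon2
          have := hfm.monotone hcon2
          rw [Equiv.apply_symm_apply] at this
          linarith
    exact kopell F G hab hcIoo hx₀Ioo hF2 hF2s hFm hFa hFb hFlt hG1 hG1s hGm2 hGcomm hGc hGx
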